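/- arXiv:1302.0521 — 2 statements merged into one kernel-verified Lean document; each statement's English description precedes it below -/
import Mathlib

section
/- A quadratic irrational α has a purely periodic continued fraction expansion if and only if α > 1 and its algebraic conjugate α' satisfies -1 < α' < 0 (Galois' theorem). -/
/-- The sequence of complete quotients of the continued fraction algorithm. -/
noncomputable def cfX (x : ℝ) : ℕ → ℝ
  | 0 => x
  | n + 1 =>
    if cfX x n - ⌊cfX x n⌋ = 0 then 0 else 1 / (cfX x n - ⌊cfX x n⌋)

/-- The partial quotients (continued fraction expansion) of a real number. -/
noncomputable def cfA (x : ℝ) (n : ℕ) : ℤ := ⌊cfX x n⌋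

lemma cfX_succ_def (x : ℝ) (n : ℕ) (h : cfX x n - (⌊cfX x n⌋ : ℝ) ≠ 0) :
    cfX x (n + 1) = 1 / (cfX x n - ⌊cfX x n⌋) := by
  show (if _ then _ else _) = _
  rw [if_neg h]

lemma cfX_irr {x : ℝ} (hx : Irrational x) : ∀ n, Irrational (cfX x n) := by
  intro n
  induction n with
  | zero => exact hx
  | succ n ih =>
    have h1 : Irrational (cfX x n - ⌊cfX x n⌋) := ih.sub_intCast _
    have h0 : cfX x n - (⌊cfX x n⌋ : ℝ) ≠ 0 := fun h => h1.ne_int 0 (by simpa using h)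
    rw [cfX_succ_def x n h0, one_div]
    exact h1.inv

lemma cfX_succ {x : ℝ} (hx : Irrational x) (n : ℕ) :
    cfX x (n + 1) = 1 / (cfX x n - ⌊cfX x n⌋) := by
  have h1 : Irrational (cfX x n - ⌊cfX x n⌋) := (cfX_irr hx n).sub_intCast _
  exact cfX_succ_def x n (fun h => h1.ne_int 0 (by simpa using h))

lemma cfX_fract_pos {x : ℝ} (hx : Irrational x) (n : ℕ) :
    0 < cfX x n - ⌊cfX x n⌋ ∧ cfX x n - ⌊cfX x n⌋ < 1 := by
  have h1 : Irrational (cfX x n - ⌊cfX x n⌋) := (cfX_irr hx n).sub_intCast _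
  have h0 : cfX x n - (⌊cfX x n⌋ : ℝ) ≠ 0 := fun h => h1.ne_int 0 (by simpa using h)
  have hnn : (0:ℝ) ≤ cfX x n - ⌊cfX x n⌋ := by
    have := Int.floor_le (cfX x n); linarith
  have hlt : cfX x n - (⌊cfX x n⌋:ℝ) < 1 := by
    have := Int.lt_floor_add_one (cfX x n); linarith
  exact ⟨lt_of_le_of_ne hnn (Ne.symm h0), hlt⟩

lemma cfX_succ_gt_one {x : ℝ} (hx : Irrational x) (n : ℕ) : 1 < cfX x (n + 1) := by
  rw [cfX_succ hx n]
  rcases cfX_fract_pos hx n with ⟨h1, h2⟩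
  rw [lt_div_iff₀ h1]; linarith

lemma cfX_eq {x : ℝ} (hx : Irrational x) (n : ℕ) :
    cfX x n = ⌊cfX x n⌋ + 1 / cfX x (n + 1) := by
  rw [cfX_succ hx n]
  rcases cfX_fract_pos hx n with ⟨h1, _⟩
  field_simp
  ring

lemma cfX_shift (x : ℝ) (m : ℕ) : ∀ n, cfX x (m + n) = cfX (cfX x m) n := by
  intro n
  induction n with
  | zero => rfl
  | succ n ih => rw [show m + (n+1) = (m+n)+1 from rfl, cfX, cfX, ih]

lemma step_alg (x y a b c d g fx : ℝ)
    (ha : 1 < a) (hb : 1 < b) (hc : 1 < c) (hd : 1 < d) (hg : 1 ≤ g)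
    (ex0 : x = fx + 1/a) (ey0 : y = fx + 1/b)
    (ex1 : a = g + 1/c) (ey1 : b = g + 1/d) :
    (x - y) * (a*b*c*d) = c - d ∧ 4 ≤ a*b*c*d := by
  have ha0 : a ≠ 0 := by linarith
  have hb0 : b ≠ 0 := by linarith
  have hc0 : c ≠ 0 := by linarith
  have hd0 : d ≠ 0 := by linarith
  constructor
  · have e1 : (x - y) * (a * b) = b - a := by
      rw [ex0, ey0]; field_simp; ring
    have e2 : (a - b) * (c * d) = d - c := by
      rw [ex1, ey1]; field_simp; ring
    linear_combination c*d*e1 - e2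
  · have hac : 2 ≤ a * c := by
      have h1c : 1/c * c = 1 := by field_simp
      nlinarith [one_div_pos.2 (by linarith : (0:ℝ) < c)]
    have hbd : 2 ≤ b * d := by
      have h1d : 1/d * d = 1 := by field_simp
      nlinarith [one_div_pos.2 (by linarith : (0:ℝ) < d)]
    nlinarith

lemma cf_unique_aux : ∀ (n : ℕ) (x y : ℝ), Irrational x → Irrational y →
    (∀ k, ⌊cfX x k⌋ = ⌊cfX y k⌋) → |x - y| ≤ ((4:ℝ)⁻¹) ^ n := by
  intro n
  induction n with
  | zero =>
    intro x y hx hy h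
    have h0 : ⌊x⌋ = ⌊y⌋ := h 0
    have h1 := Int.floor_le x
    have h2 := Int.lt_floor_add_one x
    have h3 := Int.floor_le y
    have h4 := Int.lt_floor_add_one y
    rw [pow_zero, abs_le]
    rw [h0] at h1 h2
    constructor <;> linarith
  | succ n ih =>
    intro x y hx hy h
    have hrec := ih (cfX x 2) (cfX y 2) (cfX_irr hx 2) (cfX_irr hy 2)
      (fun k => by rw [← cfX_shift, ← cfX_shift]; exact h (2 + k))
    have hx1g : 1 < cfX x 1 := cfX_succ_gt_one hx 0
    have hy1g : 1 < cfX y 1 := cfX_succ_gt_one hy 0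
    have hx2g : 1 < cfX x 2 := cfX_succ_gt_one hx 1
    have hy2g : 1 < cfX y 2 := cfX_succ_gt_one hy 1
    have ex0 : x = (⌊x⌋:ℝ) + 1 / cfX x 1 := cfX_eq hx 0
    have ey0 : y = (⌊x⌋:ℝ) + 1 / cfX y 1 := by
      have := cfX_eq hy 0
      rwa [show ⌊cfX y 0⌋ = ⌊x⌋ from (h 0).symm] at this
    have ex1 : cfX x 1 = (⌊cfX x 1⌋:ℝ) + 1 / cfX x 2 := cfX_eq hx 1
    have ey1 : cfX y 1 = (⌊cfX x 1⌋:ℝ) + 1 / cfX y 2 := by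
      have := cfX_eq hy 1
      rwa [show ⌊cfX y 1⌋ = ⌊cfX x 1⌋ from (h 1).symm] at this
    have ha1 : (1:ℝ) ≤ (⌊cfX x 1⌋:ℝ) := by
      exact_mod_cast Int.le_floor.2 (by exact_mod_cast hx1g.le)
    obtain ⟨key, hprod⟩ := step_alg x y (cfX x 1) (cfX y 1) (cfX x 2) (cfX y 2)
      (⌊cfX x 1⌋:ℝ) (⌊x⌋:ℝ) hx1g hy1g hx2g hy2g ha1 ex0 ey0 ex1 ey1
    have hP : (0:ℝ) < cfX x 1 * cfX y 1 * cfX x 2 * cfX y 2 := by linarith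
    have keyd : x - y = (cfX x 2 - cfX y 2) /
        (cfX x 1 * cfX y 1 * cfX x 2 * cfX y 2) := by
      rw [eq_div_iff (ne_of_gt hP)]; exact key
    rw [keyd, abs_div, abs_of_pos hP, pow_succ,
      div_le_iff₀ hP]
    calc |cfX x 2 - cfX y 2| ≤ (4:ℝ)⁻¹ ^ n := hrec
      _ = ((4:ℝ)⁻¹ ^ n * (4:ℝ)⁻¹) * 4 := by ring
      _ ≤ (4:ℝ)⁻¹ ^ n * (4:ℝ)⁻¹ * (cfX x 1 * cfX y 1 * cfX x 2 * cfX y 2) := by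
          have h4 : (0:ℝ) ≤ (4:ℝ)⁻¹ ^ n * (4:ℝ)⁻¹ := by positivity
          nlinarith

lemma cf_unique {x y : ℝ} (hx : Irrational x) (hy : Irrational y)
    (h : ∀ k, ⌊cfX x k⌋ = ⌊cfX y k⌋) : x = y := by
  by_contra hne
  have habs : 0 < |x - y| := abs_pos.2 (sub_ne_zero.2 hne)
  obtain ⟨n, hn⟩ := exists_pow_lt_of_lt_one habs (by norm_num : (4:ℝ)⁻¹ < 1)
  exact absurd (cf_unique_aux n x y hx hy h) (not_le.2 hn)

/-- numerators of convergents (shifted index). -/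
def PP (a : ℕ → ℤ) : ℕ → ℤ
  | 0 => 0
  | 1 => 1
  | (n+2) => a n * PP a (n+1) + PP a n

/-- denominators of convergents (shifted index). -/
def QQ (a : ℕ → ℤ) : ℕ → ℤ
  | 0 => 1
  | 1 => 0
  | (n+2) => a n * QQ a (n+1) + QQ a n

lemma cf_matrix {x : ℝ} (hx : Irrational x) :
    ∀ n, x * ((QQ (cfA x) (n+1) : ℝ) * cfX x n + (QQ (cfA x) n : ℝ)) =
      (PP (cfA x) (n+1) : ℝ) * cfX x n + (PP (cfA x) n : ℝ) := by
  intro n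
  induction n with
  | zero =>
    show x * ((QQ (cfA x) 1 : ℝ) * cfX x 0 + _) = _
    simp [PP, QQ, cfX]
  | succ n ih =>
    have hXg : 1 < cfX x (n+1) := cfX_succ_gt_one hx n
    have hX0 : cfX x (n+1) ≠ 0 := by linarith
    have hXn : cfX x n * cfX x (n+1) = (cfA x n : ℝ) * cfX x (n+1) + 1 := by
      have h := cfX_eq hx n
      have h1 : 1 / cfX x (n+1) * cfX x (n+1) = 1 := by field_simp
      rw [show cfA x n = ⌊cfX x n⌋ from rfl]
      linear_combination cfX x (n+1) * h + h1
    have hQ : (QQ (cfA x) (n+2) : ℝ) = (cfA x n : ℝ) * QQ (cfA x) (n+1) + QQ (cfA x) n := by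
      rw [show QQ (cfA x) (n+2) = cfA x n * QQ (cfA x) (n+1) + QQ (cfA x) n from rfl]
      push_cast; ring
    have hP : (PP (cfA x) (n+2) : ℝ) = (cfA x n : ℝ) * PP (cfA x) (n+1) + PP (cfA x) n := by
      rw [show PP (cfA x) (n+2) = cfA x n * PP (cfA x) (n+1) + PP (cfA x) n from rfl]
      push_cast; ring
    rw [hQ, hP]
    linear_combination (cfX x (n+1)) * ih -
      (x * (QQ (cfA x) (n+1) : ℝ) - (PP (cfA x) (n+1) : ℝ)) * hXn

lemma PP_pos (a : ℕ → ℤ) (ha : ∀ n, 1 ≤ a n) : ∀ n, 0 ≤ PP a n ∧ 1 ≤ PP a (n+1) := by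
  intro n
  induction n with
  | zero => exact ⟨le_refl 0, le_refl 1⟩
  | succ n ih =>
    refine ⟨by linarith [ih.2], ?_⟩
    show 1 ≤ a n * PP a (n+1) + PP a n
    nlinarith [ha n, ih.1, ih.2]

lemma QQ_pos (a : ℕ → ℤ) (ha : ∀ n, 1 ≤ a n) :
    ∀ n, 0 ≤ QQ a n ∧ 0 ≤ QQ a (n+1) ∧ 1 ≤ QQ a (n+2) := by
  intro n
  induction n with
  | zero =>
    refine ⟨zero_le_one, le_refl 0, ?_⟩
    show 1 ≤ a 0 * QQ a 1 + QQ a 0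
    simp [QQ]
  | succ n ih =>
    refine ⟨ih.2.1, by linarith [ih.2.2], ?_⟩
    show 1 ≤ a (n+1) * QQ a (n+2) + QQ a (n+1)
    nlinarith [ha (n+1), ih.2.1, ih.2.2]

lemma SS_mono (a : ℕ → ℤ) (ha : ∀ n, 1 ≤ a n) :
    ∀ n, 1 ≤ PP a n + QQ a n ∧ 1 ≤ PP a (n+1) + QQ a (n+1) := by
  intro n
  induction n with
  | zero => constructor <;> simp [PP, QQ]
  | succ n ih =>
    refine ⟨ih.2, ?_⟩
    show 1 ≤ (a n * PP a (n+1) + PP a n) + (a n * QQ a (n+1) + QQ a n)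
    nlinarith [ha n, ih.1, ih.2]

lemma SS_step (a : ℕ → ℤ) (ha : ∀ n, 1 ≤ a n) (p : ℕ) (hp : 1 ≤ p) :
    PP a p + QQ a p + 1 ≤ PP a (p+1) + QQ a (p+1) := by
  obtain ⟨m, rfl⟩ : ∃ m, p = m + 1 := ⟨p - 1, by omega⟩
  have h1 := SS_mono a ha m
  show _ ≤ (a m * PP a (m+1) + PP a m) + (a m * QQ a (m+1) + QQ a m)
  nlinarith [ha m, h1.1, h1.2]

lemma lin_indep {x : ℝ} (hx : Irrational x) (u v : ℤ)
    (h : (u:ℝ) * x + v = 0) : u = 0 ∧ v = 0 := by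
  have hu : u = 0 := by
    by_contra hu
    have : x = (-v : ℝ) / (u : ℝ) := by
      field_simp
      linarith
    exact hx ⟨(-v : ℚ)/(u : ℚ), by rw [this]; push_cast; ring⟩
  refine ⟨hu, ?_⟩
  have : (v:ℝ) = 0 := by rw [hu] at h; simpa using h
  exact_mod_cast this

lemma vieta {A B C : ℤ} {x y : ℝ} (hA : (A:ℝ) ≠ 0)
    (h1 : (A:ℝ) * x^2 + B * x + C = 0) (h2 : (A:ℝ) * y^2 + B * y + C = 0)
    (hxy : x ≠ y) :
    (A:ℝ) * (x + y) = -B ∧ (A:ℝ) * (x * y) = C := by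
  have hs : (x - y) * ((A:ℝ)*(x+y) + B) = 0 := by linear_combination h1 - h2
  have hsum : (A:ℝ)*(x+y) = -B := by
    rcases mul_eq_zero.1 hs with h | h
    · exact absurd (sub_eq_zero.1 h) hxy
    · linarith
  refine ⟨hsum, ?_⟩
  linear_combination x * hsum - h1

lemma quad_prop {x : ℝ} (hx : Irrational x) (A B C A' B' C' : ℤ)
    (h1 : (A:ℝ) * x^2 + B * x + C = 0) (h2 : (A':ℝ) * x^2 + B' * x + C' = 0) :
    A * B' = A' * B ∧ A * C' = A' * C := by
  have h : ((A * B' - A' * B : ℤ) : ℝ) * x + ((A * C' - A' * C : ℤ) : ℝ) = 0 := by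
    push_cast
    linear_combination (A:ℝ) * h2 - (A':ℝ) * h1
  obtain ⟨hu, hv⟩ := lin_indep hx _ _ h
  constructor <;> omega

lemma forward_dir (α α' : ℝ) (hα : Irrational α)
    (A B C : ℤ) (hA : A ≠ 0)
    (hroot : (A : ℝ) * α ^ 2 + (B : ℝ) * α + (C : ℝ) = 0)
    (hroot' : (A : ℝ) * α' ^ 2 + (B : ℝ) * α' + (C : ℝ) = 0)
    (hne : α' ≠ α) (p : ℕ) (hp : 1 ≤ p)
    (hper : ∀ n : ℕ, cfA α (n + p) = cfA α n) :
    1 < α ∧ -1 < α' ∧ α' < 0 := by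
  set a : ℕ → ℤ := cfA α with hadef
  -- a 0 ≥ 1
  have hap : 1 ≤ a p := by
    obtain ⟨m, rfl⟩ : ∃ m, p = m + 1 := ⟨p - 1, by omega⟩
    exact Int.le_floor.2 (by exact_mod_cast (cfX_succ_gt_one hα m).le)
  have ha0 : 1 ≤ a 0 := by
    have := hper 0
    simp only [Nat.zero_add] at this
    omega
  have hα1 : 1 < α := by
    have h1 : (1:ℝ) ≤ (⌊α⌋:ℝ) := by exact_mod_cast ha0
    have h2 := Int.floor_le α
    have h3 : α ≠ 1 := fun h => (hα.ne_int 1) (by simpa using h)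
    rcases lt_or_eq_of_le (le_trans h1 h2) with h | h
    · exact h
    · exact absurd h.symm h3
  have ha : ∀ n, 1 ≤ a n := by
    intro n
    rcases Nat.eq_zero_or_pos n with rfl | hn
    · exact ha0
    · obtain ⟨m, rfl⟩ : ∃ m, n = m + 1 := ⟨n - 1, by omega⟩
      exact Int.le_floor.2 (by exact_mod_cast (cfX_succ_gt_one hα m).le)
  -- cfX α p = α
  have hfix : cfX α p = α := by
    apply cf_unique (cfX_irr hα p) hα
    intro k
    rw [← cfX_shift]
    show a (p + k) = a k
    rw [Nat.add_comm p k]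
    exact hper k
  -- the quadratic satisfied by α
  set A' : ℤ := QQ a (p+1) with hA'def
  set B' : ℤ := QQ a p - PP a (p+1) with hB'def
  set C' : ℤ := -PP a p with hC'def
  have hmat := cf_matrix hα p
  rw [hfix, ← hadef] at hmat
  have h2 : (A':ℝ) * α ^ 2 + (B':ℝ) * α + (C':ℝ) = 0 := by
    rw [hA'def, hB'def, hC'def]
    push_cast
    linear_combination hmat
  -- Vieta for the original quadratic
  have hAr : (A:ℝ) ≠ 0 := Int.cast_ne_zero.2 hA
  obtain ⟨hv1, hv2⟩ := vieta hAr hroot hroot' (Ne.symm hne)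
  -- proportionality
  obtain ⟨hAB, hAC⟩ := quad_prop hα A B C A' B' C' hroot h2
  have hABr : (A:ℝ) * (B':ℝ) = (A':ℝ) * (B:ℝ) := by exact_mod_cast hAB
  have hACr : (A:ℝ) * (C':ℝ) = (A':ℝ) * (C:ℝ) := by exact_mod_cast hAC
  have e1 : (A':ℝ) * (α + α') = -(B':ℝ) := by
    have h3 : (A:ℝ) * ((A':ℝ) * (α + α') + (B':ℝ)) = 0 := by
      linear_combination (A':ℝ) * hv1 + hABr
    rcases mul_eq_zero.1 h3 with h | h
    · exact absurd h hAr
    · linarith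
  have e2 : (A':ℝ) * (α * α') = (C':ℝ) := by
    have h3 : (A:ℝ) * ((A':ℝ) * (α * α') - (C':ℝ)) = 0 := by
      linear_combination (A':ℝ) * hv2 - hACr
    rcases mul_eq_zero.1 h3 with h | h
    · exact absurd h hAr
    · linarith
  -- positivity facts
  have hQ1 : 1 ≤ A' := by
    have := (QQ_pos a ha (p-1)).2.2
    rwa [show p - 1 + 2 = p + 1 by omega] at this
  have hP1 : 1 ≤ PP a p := by
    have := (PP_pos a ha (p-1)).2
    rwa [show p - 1 + 1 = p by omega] at this
  have hS := SS_step a ha p hp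
  -- conclude
  have hQ1r : (1:ℝ) ≤ (A':ℝ) := by exact_mod_cast hQ1
  have hC'r : (C':ℝ) ≤ -1 := by
    rw [hC'def]; push_cast
    have : (1:ℝ) ≤ (PP a p : ℝ) := by exact_mod_cast hP1
    linarith
  have hneg : α' < 0 := by
    by_contra hcon; push_neg at hcon
    have h0a : 0 ≤ α * α' := mul_nonneg (by linarith) hcon
    nlinarith [e2, hC'r, hQ1r]
  have hSr : (1:ℝ) ≤ (A':ℝ) + (-(B':ℝ)) + (C':ℝ) := by
    rw [hA'def, hB'def, hC'def]
    push_cast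
    have : ((PP a p : ℤ) : ℝ) + ((QQ a p : ℤ) : ℝ) + 1 ≤ ((PP a (p+1) : ℤ) : ℝ) + ((QQ a (p+1) : ℤ) : ℝ) := by
      exact_mod_cast hS
    linarith
  have hpos : -1 < α' := by
    by_contra hcon; push_neg at hcon
    have h1 : (1+α) * (1+α') ≤ 0 :=
      mul_nonpos_of_nonneg_of_nonpos (by linarith) (by linarith)
    have h2 : (A':ℝ) * ((1+α)*(1+α')) ≤ 0 :=
      mul_nonpos_of_nonneg_of_nonpos (by linarith) h1
    have hexp : (A':ℝ) * ((1+α)*(1+α')) = (A':ℝ) + (-(B':ℝ)) + (C':ℝ) := by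
      linear_combination e1 + e2
    linarith
  exact ⟨hα1, hpos, hneg⟩

noncomputable def ySeq (b : ℝ) (a : ℕ → ℤ) : ℕ → ℝ
  | 0 => b
  | n+1 => 1 / (ySeq b a n - a n)

def trip (A B C : ℤ) (a : ℕ → ℤ) : ℕ → ℤ × ℤ × ℤ
  | 0 => (A, B, C)
  | n+1 =>
    let t := trip A B C a n
    (t.1 * a n ^ 2 + t.2.1 * a n + t.2.2, 2 * t.1 * a n + t.2.1, t.1)

lemma trip_succ (A B C : ℤ) (a : ℕ → ℤ) (n : ℕ) :
    trip A B C a (n+1) = ((trip A B C a n).1 * a n ^ 2 + (trip A B C a n).2.1 * a n + (trip A B C a n).2.2,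
      2 * (trip A B C a n).1 * a n + (trip A B C a n).2.1, (trip A B C a n).1) := rfl

lemma ySeq_succ (b : ℝ) (a : ℕ → ℤ) (n : ℕ) :
    ySeq b a (n+1) = 1 / (ySeq b a n - a n) := rfl

lemma backward_dir (α α' : ℝ) (hα : Irrational α)
    (A B C : ℤ) (hA : A ≠ 0)
    (hroot : (A : ℝ) * α ^ 2 + (B : ℝ) * α + (C : ℝ) = 0)
    (hroot' : (A : ℝ) * α' ^ 2 + (B : ℝ) * α' + (C : ℝ) = 0)
    (hne : α' ≠ α) (h1 : 1 < α) (h2 : -1 < α') (h3 : α' < 0) :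
    ∃ p : ℕ, 1 ≤ p ∧ ∀ n : ℕ, cfA α (n + p) = cfA α n := by
  set a : ℕ → ℤ := cfA α with hadef
  set y : ℕ → ℝ := ySeq α' a with hydef
  set T : ℕ → ℤ × ℤ × ℤ := trip A B C a with hTdef
  -- complete quotients are > 1
  have hX : ∀ n, 1 < cfX α n := by
    intro n
    cases n with
    | zero => exact h1
    | succ n => exact cfX_succ_gt_one hα n
  have ha1 : ∀ n, 1 ≤ a n := fun n =>
    Int.le_floor.2 (by exact_mod_cast (hX n).le)
  have ha1r : ∀ n, (1:ℝ) ≤ (a n : ℝ) := fun n => by exact_mod_cast ha1 n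
  have hfloor : ∀ n, (⌊cfX α n⌋ : ℝ) = (a n : ℝ) := fun n => rfl
  -- the big invariant
  have inv : ∀ n, (T n).1 ≠ 0 ∧
      (((T n).1:ℝ) * cfX α n^2 + ((T n).2.1:ℝ) * cfX α n + ((T n).2.2:ℝ) = 0) ∧
      (((T n).1:ℝ) * y n^2 + ((T n).2.1:ℝ) * y n + ((T n).2.2:ℝ) = 0) ∧
      (-1 < y n) ∧ (y n < 0) := by
    intro n
    induction n with
    | zero =>
      refine ⟨hA, by exact hroot, ?_, h2, h3⟩
      show ((T 0).1:ℝ) * α'^2 + ((T 0).2.1:ℝ) * α' + ((T 0).2.2:ℝ) = 0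
      exact hroot'
    | succ n ih =>
      obtain ⟨hAn, hrX, hrY, hy1, hy2⟩ := ih
      have hAnr : ((T n).1 : ℝ) ≠ 0 := Int.cast_ne_zero.2 hAn
      have hXY : cfX α n ≠ y n := by have := hX n; intro h; rw [h] at this; linarith
      obtain ⟨hv1, hv2⟩ := vieta hAnr hrX hrY hXY
      -- denominators
      have hyd : y n - (a n : ℝ) < -1 := by have := ha1r n; linarith
      have hyd0 : y n - (a n : ℝ) ≠ 0 := by linarith
      have hfr := cfX_fract_pos hα n
      rw [hfloor n] at hfr
      have hxd0 : cfX α n - (a n : ℝ) ≠ 0 := by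
        have := hfr.1; linarith
      -- new values
      have hXe : cfX α (n+1) = 1 / (cfX α n - (a n : ℝ)) := by
        rw [cfX_succ hα n, hfloor n]
      have hYe : y (n+1) = 1 / (y n - (a n : ℝ)) := ySeq_succ α' a n
      -- y bounds
      have hy1' : -1 < y (n+1) := by
        rw [hYe]
        have hm : (1 / (y n - (a n:ℝ))) * (y n - (a n:ℝ)) = 1 := by field_simp
        nlinarith [hm, hyd]
      have hy2' : y (n+1) < 0 := by
        rw [hYe]
        exact one_div_neg.2 (by linarith)
      -- new triple
      have hT1 : ((T (n+1)).1 : ℝ) = ((T n).1:ℝ) * (a n:ℝ)^2 + ((T n).2.1:ℝ) * (a n:ℝ) + ((T n).2.2:ℝ) := by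
        rw [hTdef, trip_succ]; push_cast; ring
      have hT2 : ((T (n+1)).2.1 : ℝ) = 2 * ((T n).1:ℝ) * (a n:ℝ) + ((T n).2.1:ℝ) := by
        rw [hTdef, trip_succ]; push_cast; ring
      have hT3 : ((T (n+1)).2.2 : ℝ) = ((T n).1:ℝ) := by
        rw [hTdef, trip_succ]
      -- root equations for the new triple
      have hrX' : ((T (n+1)).1:ℝ) * cfX α (n+1)^2 + ((T (n+1)).2.1:ℝ) * cfX α (n+1) + ((T (n+1)).2.2:ℝ) = 0 := by
        rw [hT1, hT2, hT3, hXe]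
        field_simp
        linear_combination hrX
      have hrY' : ((T (n+1)).1:ℝ) * y (n+1)^2 + ((T (n+1)).2.1:ℝ) * y (n+1) + ((T (n+1)).2.2:ℝ) = 0 := by
        rw [hT1, hT2, hT3, hYe]
        field_simp
        linear_combination hrY
      -- nonvanishing of the new leading coefficient
      have hAfac : ((T (n+1)).1 : ℝ) = ((T n).1:ℝ) * ((a n:ℝ) - cfX α n) * ((a n:ℝ) - y n) := by
        rw [hT1]
        linear_combination (a n : ℝ) * hv1 - hv2
      have hAn' : (T (n+1)).1 ≠ 0 := by
        rw [ne_eq, ← Int.cast_eq_zero (α := ℝ), hAfac]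
        intro h
        rcases mul_eq_zero.1 h with h | h
        · rcases mul_eq_zero.1 h with h | h
          · exact hAnr h
          · exact hxd0 (by linarith [sub_eq_zero.1 h])
        · have : (a n:ℝ) - y n > 0 := by linarith [ha1r n]
          linarith [sub_eq_zero.1 h]
      exact ⟨hAn', hrX', hrY', hy1', hy2'⟩
  -- Vieta at each level
  have hviet : ∀ n, ((T n).1:ℝ) * (cfX α n + y n) = -((T n).2.1:ℝ) ∧
      ((T n).1:ℝ) * (cfX α n * y n) = ((T n).2.2:ℝ) := by
    intro n
    obtain ⟨hAn, hrX, hrY, hy1, hy2⟩ := inv n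
    exact vieta (Int.cast_ne_zero.2 hAn) hrX hrY
      (by have := hX n; intro h; rw [h] at this; linarith)
  -- discriminant invariance
  have hdisc : ∀ n, (T n).2.1^2 - 4*(T n).1*(T n).2.2 = B^2 - 4*A*C := by
    intro n
    induction n with
    | zero => rfl
    | succ n ih =>
      rw [hTdef, trip_succ]
      dsimp only
      rw [← hTdef]
      linear_combination ih
  set D : ℤ := B^2 - 4*A*C with hDdef
  -- D ≥ 1
  have hDsq : ∀ n, (D:ℝ) = (((T n).1:ℝ))^2 * (cfX α n - y n)^2 := by
    intro n
    have hd : ((T n).2.1:ℝ)^2 - 4*((T n).1:ℝ)*((T n).2.2:ℝ) = (D:ℝ) := by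
      exact_mod_cast congrArg (fun z : ℤ => (z:ℝ)) (hdisc n)
    obtain ⟨hv1, hv2⟩ := hviet n
    linear_combination -hd + (((T n).2.1:ℝ) - ((T n).1:ℝ)*(cfX α n + y n)) * hv1 + 4*((T n).1:ℝ) * hv2
  have hXmy : ∀ n, 1 < cfX α n - y n := by
    intro n
    obtain ⟨_, _, _, _, hy2⟩ := inv n
    have := hX n; linarith
  have hA2lt : ∀ n, ((T n).1)^2 < D := by
    intro n
    have h1 := hDsq n
    have h2 := hXmy n
    have hAn : (T n).1 ≠ 0 := (inv n).1
    have hA1 : (1:ℝ) ≤ (((T n).1:ℝ))^2 := by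
      have : 1 ≤ ((T n).1)^2 := by nlinarith [sq_nonneg ((T n).1), Int.one_le_abs hAn, sq_abs ((T n).1)]
      exact_mod_cast this
    have h3 : 1 < (cfX α n - y n)^2 := by nlinarith
    have hpos : (0:ℝ) < (((T n).1:ℝ))^2 := by linarith
    have h4 := mul_lt_mul_of_pos_left h3 hpos
    rw [mul_one] at h4
    have : (((T n).1:ℝ))^2 < (D:ℝ) := by rw [h1]; exact h4
    exact_mod_cast this
  have hD1 : 1 ≤ D := by
    have h0 := hA2lt 0
    nlinarith [sq_nonneg ((T 0).1)]
  have hAabs : ∀ n, |(T n).1| ≤ D := by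
    intro n
    have h1 := hA2lt n
    have h2 := Int.one_le_abs ((inv n).1)
    nlinarith [sq_abs ((T n).1), abs_nonneg ((T n).1)]
  set M : ℤ := D + 4*D^2 with hMdef
  have hBabs : ∀ n, |(T (n+1)).2.1| ≤ M := by
    intro n
    have hd := hdisc (n+1)
    have hC : (T (n+1)).2.2 = (T n).1 := by rw [hTdef, trip_succ]
    have habs : (T (n+1)).1 * (T n).1 ≤ D * D := by
      calc (T (n+1)).1 * (T n).1 ≤ |(T (n+1)).1 * (T n).1| := le_abs_self _
        _ = |(T (n+1)).1| * |(T n).1| := abs_mul _ _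
        _ ≤ D * D := mul_le_mul (hAabs _) (hAabs _) (abs_nonneg _) (by linarith)
    have hb2 : ((T (n+1)).2.1)^2 ≤ M := by
      rw [hC] at hd
      rw [hMdef]; nlinarith [hd, habs]
    rcases eq_or_ne ((T (n+1)).2.1) 0 with h | h
    · rw [h]; simp; rw [hMdef]; nlinarith
    · have := Int.one_le_abs h
      nlinarith [sq_abs ((T (n+1)).2.1), abs_nonneg ((T (n+1)).2.1)]
  have hAabs' : ∀ n, |(T (n+1)).1| ≤ M := fun n => le_trans (hAabs (n+1)) (by rw [hMdef]; nlinarith)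
  -- pigeonhole
  set S : Finset (ℤ × ℤ) := Finset.Icc (-M, -M) (M, M) with hSdef
  have hmem : ∀ n : ℕ, ((T (n+1)).1, (T (n+1)).2.1) ∈ S := by
    intro n
    rw [hSdef, Finset.mem_Icc]
    have h1 := abs_le.1 (hAabs' n)
    have h2 := abs_le.1 (hBabs n)
    exact ⟨⟨h1.1, h2.1⟩, ⟨h1.2, h2.2⟩⟩
  obtain ⟨j0, k0, hjk0, heq0⟩ := Finite.exists_ne_map_eq_of_infinite
    (fun n : ℕ => (⟨((T (n+1)).1, (T (n+1)).2.1), hmem n⟩ : {q : ℤ × ℤ // q ∈ S}))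
  have heq0' : ((T (j0+1)).1, (T (j0+1)).2.1) = ((T (k0+1)).1, (T (k0+1)).2.1) :=
    congrArg Subtype.val heq0
  obtain ⟨j, k, hlt, e1, e2⟩ : ∃ j k : ℕ, j < k ∧ (T (j+1)).1 = (T (k+1)).1 ∧
      (T (j+1)).2.1 = (T (k+1)).2.1 := by
    have hp1 : (T (j0+1)).1 = (T (k0+1)).1 := (Prod.ext_iff.1 heq0').1
    have hp2 : (T (j0+1)).2.1 = (T (k0+1)).2.1 := (Prod.ext_iff.1 heq0').2
    rcases hjk0.lt_or_gt with h | h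
    · exact ⟨j0, k0, h, hp1, hp2⟩
    · exact ⟨k0, j0, h, hp1.symm, hp2.symm⟩
  -- third coefficient also equal
  have hA1 : (T (j+1)).1 ≠ 0 := (inv (j+1)).1
  have e3 : (T (j+1)).2.2 = (T (k+1)).2.2 := by
    have d1 := hdisc (j+1)
    have d2 := hdisc (k+1)
    rw [← e1, ← e2] at d2
    have hmm : (T (j+1)).1 * (T (j+1)).2.2 = (T (j+1)).1 * (T (k+1)).2.2 := by linarith
    exact mul_left_cancel₀ hA1 hmm
  -- the complete quotients at j+1 and k+1 agree
  have hfac : ∀ t : ℝ, ((T (j+1)).1:ℝ)*t^2 + ((T (j+1)).2.1:ℝ)*t + ((T (j+1)).2.2:ℝ) =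
      ((T (j+1)).1:ℝ) * (t - cfX α (j+1)) * (t - y (j+1)) := by
    intro t
    obtain ⟨hv1, hv2⟩ := hviet (j+1)
    linear_combination t * hv1 - hv2
  have hXeq : cfX α (j+1) = cfX α (k+1) := by
    have hrX2 := (inv (k+1)).2.1
    rw [← e1, ← e2, ← e3] at hrX2
    rw [hfac (cfX α (k+1))] at hrX2
    rcases mul_eq_zero.1 hrX2 with h | h
    · rcases mul_eq_zero.1 h with h | h
      · exact absurd h (Int.cast_ne_zero.2 hA1)
      · exact (sub_eq_zero.1 h).symm
    · exfalso
      have h1 := hX (k+1)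
      have h2 := (inv (j+1)).2.2.2.2
      have := sub_eq_zero.1 h
      rw [this] at h1
      linarith
  -- floors from conjugates
  have hfl : ∀ m : ℕ, ⌊-1 / y (m+1)⌋ = a m := by
    intro m
    obtain ⟨_, _, _, hy1, hy2⟩ := inv m
    have hyd : y m - (a m : ℝ) < -1 := by have := ha1r m; linarith
    have hyd0 : y m - (a m : ℝ) ≠ 0 := by linarith
    have hYe : y (m+1) = 1 / (y m - (a m : ℝ)) := ySeq_succ α' a m
    have hyne : y (m+1) ≠ 0 := by
      rw [hYe]; exact one_div_ne_zero hyd0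
    have hval : -1 / y (m+1) = -(y m) + (a m:ℝ) := by
      rw [hYe]; field_simp; ring
    rw [hval, Int.floor_add_intCast, Int.floor_eq_zero_iff.2 ⟨by linarith, by linarith⟩]
    ring
  -- one backward step
  have step_back : ∀ m d : ℕ, cfX α (m+1) = cfX α (m+1+d) → cfX α m = cfX α (m+d) := by
    intro m d hstep
    have hirr := cfX_irr hα (m+1)
    obtain ⟨hB1, hrX1, _, _, _⟩ := inv (m+1)
    obtain ⟨hB2, hrX2, _, _, _⟩ := inv (m+1+d)
    rw [← hstep] at hrX2
    obtain ⟨hABp, hACp⟩ := quad_prop hirr _ _ _ _ _ _ hrX1 hrX2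
    obtain hw1 := (hviet (m+1)).1
    obtain hw2 := (hviet (m+1+d)).1
    rw [← hstep] at hw2
    have hBr1 : ((T (m+1)).1:ℝ) ≠ 0 := Int.cast_ne_zero.2 hB1
    have hBr2 : ((T (m+1+d)).1:ℝ) ≠ 0 := Int.cast_ne_zero.2 hB2
    have hyeq : y (m+1) = y (m+1+d) := by
      have hABr : ((T (m+1)).1:ℝ) * ((T (m+1+d)).2.1:ℝ) =
          ((T (m+1+d)).1:ℝ) * ((T (m+1)).2.1:ℝ) := by exact_mod_cast hABp
      have hz : ((T (m+1)).1:ℝ) * ((T (m+1+d)).1:ℝ) * (y (m+1) - y (m+1+d)) = 0 := by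
        linear_combination ((T (m+1+d)).1:ℝ) * hw1 - ((T (m+1)).1:ℝ) * hw2 + hABr
      rcases mul_eq_zero.1 hz with h | h
      · exact absurd h (mul_ne_zero hBr1 hBr2)
      · linarith [sub_eq_zero.1 h]
    have haeq : a m = a (m+d) := by
      rw [← hfl m, ← hfl (m+d)]
      rw [show m+d+1 = m+1+d by omega, ← hyeq]
    have q1 : cfX α m = (a m:ℝ) + 1/cfX α (m+1) := cfX_eq hα m
    have q2 : cfX α (m+d) = (a (m+d):ℝ) + 1/cfX α (m+d+1) := cfX_eq hα (m+d)
    rw [q1, q2, ← haeq, show m+d+1 = m+1+d by omega, ← hstep]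
  -- descent
  have hdesc : ∀ i : ℕ, i ≤ j+1 → cfX α (j+1-i) = cfX α (j+1-i + (k-j)) := by
    intro i
    induction i with
    | zero =>
      intro _
      simp only [Nat.sub_zero]
      rw [show j+1+(k-j) = k+1 by omega]
      exact hXeq
    | succ i ih =>
      intro hle
      have h' := ih (by omega)
      rw [show j+1-i = (j-i)+1 by omega] at h'
      have := step_back (j-i) (k-j) h'
      rwa [show j+1-(i+1) = j-i by omega]
  have hfix : cfX α (k-j) = α := by
    have h := hdesc (j+1) (le_refl _)
    rw [Nat.sub_self] at h
    rw [Nat.zero_add] at h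
    exact h.symm
  refine ⟨k-j, by omega, ?_⟩
  intro n
  show ⌊cfX α (n + (k-j))⌋ = ⌊cfX α n⌋
  rw [Nat.add_comm n (k-j), cfX_shift α (k-j) n, hfix]

/-- Galois: a quadratic irrational has purely periodic continued fraction iff
`α > 1` and its conjugate lies in `(-1, 0)`. -/
theorem purely_periodic_iff_reduced (α α' : ℝ) (hα : Irrational α)
    (A B C : ℤ) (hA : A ≠ 0)
    (hroot : (A : ℝ) * α ^ 2 + (B : ℝ) * α + (C : ℝ) = 0)
    (hroot' : (A : ℝ) * α' ^ 2 + (B : ℝ) * α' + (C : ℝ) = 0)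
    (hne : α' ≠ α) :
    (∃ p : ℕ, 1 ≤ p ∧ ∀ n : ℕ, cfA α (n + p) = cfA α n) ↔
      1 < α ∧ -1 < α' ∧ α' < 0 := by
  constructor
  · rintro ⟨p, hp, hper⟩
    exact forward_dir α α' hα A B C hA hroot hroot' hne p hp hper
  · rintro ⟨h1, h2, h3⟩
    exact backward_dir α α' hα A B C hA hroot hroot' hne h1 h2 h3
end

section
/- If the continued fraction of √(n²+j) (with n a positive integer, 1 ≤ j ≤ 2n) has period of length 3, then it equals [n; x, x, 2n repeated] for some positive integer x, x is even, j is odd, and j = (2xn+1)/(x²+1). -/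
set_option maxHeartbeats 1000000


lemma cfX_zero (x : ℝ) : cfX x 0 = x := rfl

lemma cfX_succ_eq {x : ℝ} {m : ℕ} (h : cfX x m - (⌊cfX x m⌋ : ℝ) ≠ 0) :
    cfX x (m + 1) = 1 / (cfX x m - ⌊cfX x m⌋) := by
  rw [cfX, if_neg h]

lemma cfX_irrational {x : ℝ} (hx : Irrational x) : ∀ m, Irrational (cfX x m) := by
  intro m
  induction m with
  | zero => exact hx
  | succ m ih =>
    have h1 : Irrational (cfX x m - (⌊cfX x m⌋ : ℤ)) := ih.sub_intCast _
    have h1' : Irrational (cfX x m - ((⌊cfX x m⌋ : ℤ) : ℝ)) := h1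
    rw [cfX_succ_eq h1'.ne_zero, one_div]
    exact h1'.inv

lemma cfX_one_lt {x : ℝ} (hx : Irrational x) (m : ℕ) : 1 < cfX x (m + 1) := by
  have h1 : Irrational (cfX x m - ((⌊cfX x m⌋ : ℤ) : ℝ)) := (cfX_irrational hx m).sub_intCast _
  rw [cfX_succ_eq h1.ne_zero]
  have hfr : cfX x m - ((⌊cfX x m⌋ : ℤ) : ℝ) = Int.fract (cfX x m) := Int.self_sub_floor _
  rw [hfr]
  have h0 : 0 < Int.fract (cfX x m) := by
    rcases lt_or_eq_of_le (Int.fract_nonneg (cfX x m)) with h | h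
    · exact h
    · exact absurd (hfr.trans h.symm) h1.ne_zero
  exact (one_lt_div h0).2 (Int.fract_lt_one _)

lemma cfX_floor_add {x : ℝ} (hx : Irrational x) (m : ℕ) :
    cfX x m = ((⌊cfX x m⌋ : ℤ) : ℝ) + 1 / cfX x (m + 1) := by
  have h1 : Irrational (cfX x m - ((⌊cfX x m⌋ : ℤ) : ℝ)) := (cfX_irrational hx m).sub_intCast _
  rw [cfX_succ_eq h1.ne_zero, one_div_one_div]
  ring

/-- If the continued fraction of `√(n²+j)` has period of length 3, then it is
`[n; x, x, 2n repeated]` with `x` even, `j` odd and `j = (2xn+1)/(x²+1)`. -/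
theorem sqrt_period_three (n j : ℕ) (hn : 0 < n) (hj1 : 1 ≤ j) (hj2 : j ≤ 2 * n)
    (hper : sInf {p : ℕ | 0 < p ∧ ∀ m : ℕ, 1 ≤ m →
        cfA (Real.sqrt ((n : ℝ) ^ 2 + (j : ℝ))) (m + p) = cfA (Real.sqrt ((n : ℝ) ^ 2 + (j : ℝ))) m} = 3) :
    ∃ x : ℤ, 0 < x ∧ Even x ∧ Odd j ∧
      cfA (Real.sqrt ((n : ℝ) ^ 2 + (j : ℝ))) 0 = n ∧
      (∀ k : ℕ, cfA (Real.sqrt ((n : ℝ) ^ 2 + (j : ℝ))) (3 * k + 1) = x ∧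
        cfA (Real.sqrt ((n : ℝ) ^ 2 + (j : ℝ))) (3 * k + 2) = x ∧
        cfA (Real.sqrt ((n : ℝ) ^ 2 + (j : ℝ))) (3 * k + 3) = 2 * n) ∧
      (j : ℚ) = (2 * (x : ℚ) * (n : ℚ) + 1) / ((x : ℚ) ^ 2 + 1) := by
  set y := Real.sqrt ((n : ℝ) ^ 2 + (j : ℝ)) with hy
  -- irrationality
  have hD : (n : ℝ) ^ 2 + (j : ℝ) = ((n ^ 2 + j : ℕ) : ℝ) := by push_cast; ring
  have hirr : Irrational y := by
    rw [hy, hD, irrational_sqrt_natCast_iff]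
    rintro ⟨k, hk⟩
    have hk1 : n * n < k * k := by nlinarith
    have hk2 : k * k < (n + 1) * (n + 1) := by nlinarith
    have h1 : n < k := by
      by_contra h
      push_neg at h
      exact absurd hk1 (not_lt.2 (Nat.mul_le_mul h h))
    have h2 : k < n + 1 := by
      by_contra h
      push_neg at h
      exact absurd hk2 (not_lt.2 (Nat.mul_le_mul h h))
    omega
  -- floor of y is n
  have hyge : (n : ℝ) ≤ y := by
    rw [hy, Real.le_sqrt (by positivity) (by positivity)]
    have : (0:ℝ) ≤ (j:ℝ) := by positivity
    linarith
  have hylt : y < (n : ℝ) + 1 := by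
    rw [hy, Real.sqrt_lt' (by positivity)]
    have : (j : ℝ) ≤ 2 * n := by exact_mod_cast hj2
    nlinarith
  have hfy : ⌊y⌋ = (n : ℤ) := by
    rw [Int.floor_eq_iff]
    constructor
    · exact_mod_cast hyge
    · push_cast
      exact hylt
  have a0 : cfA y 0 = (n : ℤ) := hfy
  -- the period hypothesis gives quotient-periodicity with period 3
  have hS3 : ∀ m : ℕ, 1 ≤ m → cfA y (m + 3) = cfA y m := by
    have hne : ({p : ℕ | 0 < p ∧ ∀ m : ℕ, 1 ≤ m → cfA y (m + p) = cfA y m}).Nonempty := by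
      by_contra h
      rw [Set.not_nonempty_iff_eq_empty] at h
      rw [h, Nat.sInf_empty] at hper
      exact absurd hper (by norm_num)
    have hm := Nat.sInf_mem hne
    rw [hper] at hm
    exact hm.2
  -- abbreviations
  set g : ℕ → ℝ := fun m => cfX y m with hg
  have hg1 : ∀ m, 1 < g (m + 1) := fun m => cfX_one_lt hirr m
  have hgpos : ∀ m, 0 < g (m + 1) := fun m => lt_trans one_pos (hg1 m)
  have hgne : ∀ m, g (m + 1) ≠ 0 := fun m => ne_of_gt (hgpos m)
  have hgrel : ∀ m, g m = ((cfA y m : ℤ) : ℝ) + 1 / g (m + 1) := fun m => cfX_floor_add hirr m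
  have hA1 : ∀ m, (1 : ℤ) ≤ cfA y (m + 1) := by
    intro m
    rw [cfA, Int.le_floor]
    exact_mod_cast (hg1 m).le
  -- product bound
  have hprod : ∀ m, 2 < g (m + 1) * g (m + 2) := by
    intro m
    have h1 : 1 < g (m + 2) := hg1 (m + 1)
    have h2 : g (m + 1) = ((cfA y (m + 1) : ℤ) : ℝ) + 1 / g (m + 2) := hgrel (m + 1)
    have h2ne : g (m + 2) ≠ 0 := hgne (m + 1)
    have hA : (1 : ℤ) ≤ cfA y (m + 1) := hA1 m
    have hAre : (1 : ℝ) ≤ ((cfA y (m + 1) : ℤ) : ℝ) := by exact_mod_cast hA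
    have hmul : g (m + 1) * g (m + 2) = ((cfA y (m + 1) : ℤ) : ℝ) * g (m + 2) + 1 := by
      rw [h2]
      field_simp
    nlinarith [hmul, hAre, h1]
  -- the contraction
  set E : ℕ → ℝ := fun m => |g (m + 4) - g (m + 1)| with hE
  have hflp : ∀ m, cfA y (m + 4) = cfA y (m + 1) := fun m => hS3 (m + 1) (by omega)
  have hE1 : ∀ m, E m < 1 := by
    intro m
    have hfl : ⌊g (m + 4)⌋ = ⌊g (m + 1)⌋ := hflp m
    have l1 : ((⌊g (m + 1)⌋ : ℤ) : ℝ) ≤ g (m + 1) := Int.floor_le _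
    have l2 : g (m + 1) < (⌊g (m + 1)⌋ : ℤ) + 1 := Int.lt_floor_add_one _
    have l3 : ((⌊g (m + 1)⌋ : ℤ) : ℝ) ≤ g (m + 4) := by rw [← hfl]; exact Int.floor_le _
    have l4 : g (m + 4) < (⌊g (m + 1)⌋ : ℤ) + 1 := by rw [← hfl]; exact Int.lt_floor_add_one _
    show |g (m + 4) - g (m + 1)| < 1
    rw [abs_sub_lt_iff]
    constructor <;> linarith
  have hE2 : ∀ m, E m = E (m + 1) / (g (m + 2) * g (m + 5)) := by
    intro m
    have e1 : g (m + 1) = ((cfA y (m + 1) : ℤ) : ℝ) + 1 / g (m + 2) := hgrel (m + 1)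
    have e4 : g (m + 4) = ((cfA y (m + 4) : ℤ) : ℝ) + 1 / g (m + 5) := hgrel (m + 4)
    have h2ne : g (m + 2) ≠ 0 := hgne (m + 1)
    have h5ne : g (m + 5) ≠ 0 := hgne (m + 4)
    have hfl : ((cfA y (m + 4) : ℤ) : ℝ) = ((cfA y (m + 1) : ℤ) : ℝ) := by
      exact_mod_cast congrArg (fun z : ℤ => (z : ℝ)) (hflp m)
    have hd : g (m + 4) - g (m + 1) = (g (m + 2) - g (m + 5)) / (g (m + 2) * g (m + 5)) := by
      rw [e4, e1, hfl]
      field_simp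
      ring
    have hpos : 0 < g (m + 2) * g (m + 5) := mul_pos (hgpos (m + 1)) (hgpos (m + 4))
    show |g (m + 4) - g (m + 1)| = |g (m + 5) - g (m + 2)| / (g (m + 2) * g (m + 5))
    rw [hd, abs_div, abs_of_pos hpos, abs_sub_comm]
  have hE3 : ∀ m, 4 * E m ≤ E (m + 2) := by
    intro m
    have h1 := hE2 m
    have h2 : E (m + 1) = E (m + 2) / (g (m + 3) * g (m + 6)) := hE2 (m + 1)
    have p25 : 2 < g (m + 2) * g (m + 3) := hprod (m + 1)
    have p56 : 2 < g (m + 5) * g (m + 6) := hprod (m + 4)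
    have hnn : 0 ≤ E (m + 2) := abs_nonneg _
    have hd1 : 0 < g (m + 2) * g (m + 5) := mul_pos (hgpos (m + 1)) (hgpos (m + 4))
    have hd2 : 0 < g (m + 3) * g (m + 6) := mul_pos (hgpos (m + 2)) (hgpos (m + 5))
    have h2ne : g (m + 2) ≠ 0 := hgne (m + 1)
    have h3ne : g (m + 3) ≠ 0 := hgne (m + 2)
    have h5ne : g (m + 5) ≠ 0 := hgne (m + 4)
    have h6ne : g (m + 6) ≠ 0 := hgne (m + 5)
    have key : E m = E (m + 2) / ((g (m + 2) * g (m + 3)) * (g (m + 5) * g (m + 6))) := by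
      rw [h1, h2, div_div]
      congr 1
      ring
    rw [key]
    have hDpos : (0:ℝ) < (g (m + 2) * g (m + 3)) * (g (m + 5) * g (m + 6)) := by positivity
    have hD4 : (4:ℝ) ≤ (g (m + 2) * g (m + 3)) * (g (m + 5) * g (m + 6)) := by
      nlinarith [p25, p56]
    rw [mul_comm, ← le_div_iff₀ (by norm_num : (0:ℝ) < 4)]
    exact div_le_div_of_nonneg_left hnn (by norm_num) hD4
  have hE4 : ∀ M : ℕ, 4 ^ M * E 0 ≤ E (2 * M) := by
    intro M
    induction M with
    | zero => simp
    | succ M ih =>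
      have h3 := hE3 (2 * M)
      have h4 : (0:ℝ) < 4 ^ M := by positivity
      have : 2 * (M + 1) = 2 * M + 2 := by ring
      rw [this]
      calc 4 ^ (M + 1) * E 0 = 4 * (4 ^ M * E 0) := by ring
        _ ≤ 4 * E (2 * M) := by linarith
        _ ≤ E (2 * M + 2) := h3
  have hE0 : E 0 = 0 := by
    by_contra h
    have hpos : 0 < E 0 := lt_of_le_of_ne (abs_nonneg _) (Ne.symm h)
    obtain ⟨M, hM⟩ := pow_unbounded_of_one_lt (1 / E 0) (by norm_num : (1:ℝ) < 4)
    have h1 : 1 < 4 ^ M * E 0 := by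
      rw [div_lt_iff₀ hpos] at hM
      linarith
    have h2 := hE4 M
    have h3 := hE1 (2 * M)
    linarith
  have heq : g 4 = g 1 := by
    have h : |g 4 - g 1| = 0 := hE0
    rw [abs_eq_zero, sub_eq_zero] at h
    exact h
  -- set up the algebra
  set A := cfA y 1 with hAdef
  set B := cfA y 2 with hBdef
  set C := cfA y 3 with hCdef
  have e0 : y = (n : ℝ) + 1 / g 1 := by
    have := hgrel 0
    rw [a0] at this
    simpa [hg, cfX_zero] using this
  have e1 : g 1 = (A : ℝ) + 1 / g 2 := hgrel 1
  have e2 : g 2 = (B : ℝ) + 1 / g 3 := hgrel 2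
  have e3 : g 3 = (C : ℝ) + 1 / g 1 := by
    have h : g 3 = (C : ℝ) + 1 / g 4 := hgrel 3
    rwa [heq] at h
  have hx1 := hg1 0
  have hx2 := hg1 1
  have hx3 := hg1 2
  have hx1ne : g 1 ≠ 0 := hgne 0
  have hx2ne : g 2 ≠ 0 := hgne 1
  have hx3ne : g 3 ≠ 0 := hgne 2
  have h1 : g 1 * (y - (n : ℝ)) = 1 := by
    rw [e0, add_sub_cancel_left]
    exact mul_one_div_cancel hx1ne
  have h2 : g 2 * (g 1 - (A : ℝ)) = 1 := by
    rw [e1, add_sub_cancel_left]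
    exact mul_one_div_cancel hx2ne
  have h3 : g 3 * (g 2 - (B : ℝ)) = 1 := by
    rw [e2, add_sub_cancel_left]
    exact mul_one_div_cancel hx3ne
  have h4 : g 1 * (g 3 - (C : ℝ)) = 1 := by
    rw [e3, add_sub_cancel_left]
    exact mul_one_div_cancel hx1ne
  have hx3t : g 3 - (C : ℝ) = y - (n : ℝ) := by
    have := h4.trans h1.symm
    exact mul_left_cancel₀ hx1ne this
  have hx3eq : g 3 = (C : ℝ) + (y - (n : ℝ)) := by linarith
  have eqA : g 2 * (1 - (A : ℝ) * (y - (n : ℝ))) = y - (n : ℝ) := by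
    linear_combination (y - (n : ℝ)) * h2 - g 2 * h1
  have eqB : g 2 * ((C : ℝ) + (y - (n : ℝ))) = (B : ℝ) * ((C : ℝ) + (y - (n : ℝ))) + 1 := by
    rw [hx3eq] at h3
    linear_combination h3
  have key : ((B : ℝ) * ((C : ℝ) + (y - (n : ℝ))) + 1) * (1 - (A : ℝ) * (y - (n : ℝ)))
      = (y - (n : ℝ)) * ((C : ℝ) + (y - (n : ℝ))) := by
    linear_combination ((C : ℝ) + (y - (n : ℝ))) * eqA - (1 - (A : ℝ) * (y - (n : ℝ))) * eqB
  have hy2 : y ^ 2 = (n : ℝ) ^ 2 + (j : ℝ) := by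
    rw [hy]; exact Real.sq_sqrt (by positivity)
  have main : ((2 * (n : ℤ) - C + B - A + 2 * A * B * (n : ℤ) - A * B * C : ℤ) : ℝ) * y
      = (((j : ℤ) + 2 * (n : ℤ) ^ 2 - C * (n : ℤ) + B * (n : ℤ) - B * C - A * (n : ℤ)
          + A * B * (j : ℤ) + 2 * A * B * (n : ℤ) ^ 2 - A * B * C * (n : ℤ) - 1 : ℤ) : ℝ) := by
    push_cast
    linear_combination key + ((A : ℝ) * (B : ℝ) + 1) * hy2
  have hPz : (2 * (n : ℤ) - C + B - A + 2 * A * B * (n : ℤ) - A * B * C : ℤ) = 0 := by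
    by_contra hP
    apply hirr
    refine ⟨(((j : ℤ) + 2 * (n : ℤ) ^ 2 - C * (n : ℤ) + B * (n : ℤ) - B * C - A * (n : ℤ)
          + A * B * (j : ℤ) + 2 * A * B * (n : ℤ) ^ 2 - A * B * C * (n : ℤ) - 1 : ℤ) : ℚ)
        / ((2 * (n : ℤ) - C + B - A + 2 * A * B * (n : ℤ) - A * B * C : ℤ) : ℚ), ?_⟩
    have hPR : (2 * (n : ℝ) - (C : ℝ) + (B : ℝ) - (A : ℝ) + 2 * (A : ℝ) * (B : ℝ) * (n : ℝ)
        - (A : ℝ) * (B : ℝ) * (C : ℝ)) ≠ 0 := by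
      intro h0
      apply hP
      have hcast : ((2 * (n : ℤ) - C + B - A + 2 * A * B * (n : ℤ) - A * B * C : ℤ) : ℝ) = 0 := by
        push_cast
        linear_combination h0
      exact_mod_cast hcast
    push_cast
    push_cast at main
    rw [div_eq_iff hPR]
    linear_combination -main
  have hQz : ((j : ℤ) + 2 * (n : ℤ) ^ 2 - C * (n : ℤ) + B * (n : ℤ) - B * C - A * (n : ℤ)
          + A * B * (j : ℤ) + 2 * A * B * (n : ℤ) ^ 2 - A * B * C * (n : ℤ) - 1 : ℤ) = 0 := by
    have : (((j : ℤ) + 2 * (n : ℤ) ^ 2 - C * (n : ℤ) + B * (n : ℤ) - B * C - A * (n : ℤ)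
          + A * B * (j : ℤ) + 2 * A * B * (n : ℤ) ^ 2 - A * B * C * (n : ℤ) - 1 : ℤ) : ℝ) = 0 := by
      rw [← main, hPz]
      simp
    exact_mod_cast this
  -- integer arithmetic endgame
  have hA1' : (1 : ℤ) ≤ A := hA1 0
  have hB1' : (1 : ℤ) ≤ B := hA1 1
  have hdvd : (A * B + 1) ∣ (B - A) := ⟨C - 2 * (n : ℤ), by linear_combination hPz⟩
  have habs : |B - A| < A * B + 1 := by
    rw [abs_lt]
    constructor
    · nlinarith [mul_nonneg (sub_nonneg.2 hA1') (sub_nonneg.2 hB1')]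
    · nlinarith [mul_nonneg (sub_nonneg.2 hA1') (sub_nonneg.2 hB1')]
  have hBA : B = A := by
    have := Int.eq_zero_of_abs_lt_dvd hdvd habs
    omega
  have hC2n : C = 2 * (n : ℤ) := by
    rw [hBA] at hPz
    have h0 : (A * A + 1) * (C - 2 * (n : ℤ)) = 0 := by linear_combination -hPz
    have h1 : (A * A + 1) ≠ 0 := by nlinarith
    have := mul_eq_zero.1 h0
    rcases this with h | h
    · exact absurd h h1
    · omega
  have hjA : (j : ℤ) * (A ^ 2 + 1) = 2 * A * (n : ℤ) + 1 := by
    rw [hBA, hC2n] at hQz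
    linear_combination hQz
  -- parity
  have hjodd : Odd j := by
    rcases Nat.even_or_odd j with he | ho
    · exfalso
      obtain ⟨m, hm⟩ := he
      have hj2' : (j : ℤ) = 2 * (m : ℤ) := by
        have : j = 2 * m := by omega
        exact_mod_cast this
      have h2 : 2 * ((m : ℤ) * (A ^ 2 + 1)) = 2 * (A * (n : ℤ)) + 1 := by
        rw [hj2'] at hjA
        linear_combination hjA
      generalize (m : ℤ) * (A ^ 2 + 1) = u at h2
      generalize A * (n : ℤ) = v at h2
      omega
    · exact ho
  have hAeven : Even A := by
    rcases Int.even_or_odd A with he | ho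
    · exact he
    · exfalso
      obtain ⟨k, hk⟩ := ho
      have h2 : 2 * ((j : ℤ) * (2 * k ^ 2 + 2 * k + 1)) = 2 * ((2 * k + 1) * (n : ℤ)) + 1 := by
        rw [hk] at hjA
        linear_combination hjA
      generalize (j : ℤ) * (2 * k ^ 2 + 2 * k + 1) = u at h2
      generalize (2 * k + 1) * (n : ℤ) = v at h2
      omega
  -- periodicity of the quotients
  have hper3 : ∀ k : ℕ, cfA y (3 * k + 1) = A ∧ cfA y (3 * k + 2) = A ∧ cfA y (3 * k + 3) = 2 * (n : ℤ) := by
    intro k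
    induction k with
    | zero =>
      refine ⟨rfl, ?_, ?_⟩
      · exact hBA
      · exact hC2n
    | succ k ih =>
      obtain ⟨i1, i2, i3⟩ := ih
      refine ⟨?_, ?_, ?_⟩
      · have h := hS3 (3 * k + 1) (by omega)
        rw [show 3 * (k + 1) + 1 = 3 * k + 1 + 3 by ring, h, i1]
      · have h := hS3 (3 * k + 2) (by omega)
        rw [show 3 * (k + 1) + 2 = 3 * k + 2 + 3 by ring, h, i2]
      · have h := hS3 (3 * k + 3) (by omega)
        rw [show 3 * (k + 1) + 3 = 3 * k + 3 + 3 by ring, h, i3]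
  -- conclusion
  refine ⟨A, by omega, hAeven, hjodd, a0, ?_, ?_⟩
  · intro k
    have := hper3 k
    exact ⟨this.1, this.2.1, by exact_mod_cast this.2.2⟩
  · have hcast : (j : ℚ) * ((A : ℚ) ^ 2 + 1) = 2 * (A : ℚ) * (n : ℚ) + 1 := by
      exact_mod_cast hjA
    rw [eq_div_iff (by positivity)]
    linear_combination hcast
end
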